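/- Let 0 < δ ≤ 1. Then there exists f ∈ L²(ℝ) such that the Gabor system {M_{qδ} T_p f : p,q ∈ ℤ} is a normalized tight frame for L²(ℝ), i.e. ∑_{p,q∈ℤ} |⟨g, M_{qδ} T_p f⟩|² = ‖g‖² for every g ∈ L²(ℝ). -/

import Mathlib

open MeasureTheory

lemma gabor_mem_iff (p : ℤ) (t : ℝ) :
    t - (p : ℝ) ∈ Set.Ioc (0 : ℝ) 1 ↔ t ∈ Set.Ioc (p : ℝ) (p + 1) := by
  simp only [Set.mem_Ioc]
  constructor <;> rintro ⟨h1, h2⟩ <;> constructor <;> linarith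

/-- For `0 < δ ≤ 1` there exists `f ∈ L²(ℝ)` whose Gabor system
`{M_{qδ} T_p f : p, q ∈ ℤ}` is a normalized tight (Parseval) frame for `L²(ℝ)`. -/
theorem gabor_ntf_exists_of_delta_le_one (δ : ℝ) (hδ0 : 0 < δ) (hδ1 : δ ≤ 1) :
    ∃ (f : Lp ℂ 2 (volume : Measure ℝ)) (G : ℤ × ℤ → Lp ℂ 2 (volume : Measure ℝ)),
      (∀ p q : ℤ, ∀ᵐ t : ℝ, (G (p, q) : ℝ → ℂ) t
        = Complex.exp (2 * (Real.pi : ℂ) * Complex.I * ((q : ℂ) * (δ : ℂ)) * (t : ℂ))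
          * (f : ℝ → ℂ) (t - (p : ℝ))) ∧
      ∀ g : Lp ℂ 2 (volume : Measure ℝ),
        ∑' pq : ℤ × ℤ, ‖(inner ℂ g (G pq) : ℂ)‖ ^ 2 = ‖g‖ ^ 2 := by
  haveI hTfact : Fact (0 < δ⁻¹) := ⟨inv_pos.2 hδ0⟩
  set T : ℝ := δ⁻¹ with hTdef
  have hT0 : 0 < T := inv_pos.2 hδ0
  have hδT : δ * T = 1 := mul_inv_cancel₀ hδ0.ne'
  have hT1 : (1 : ℝ) ≤ T := by nlinarith
  set c : ℂ := ((Real.sqrt δ : ℝ) : ℂ) with hcdef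
  have hcconj : (starRingEnd ℂ) c = c := Complex.conj_ofReal _
  have hcnorm : ‖c‖ = Real.sqrt δ := by
    rw [hcdef, Complex.norm_real, Real.norm_eq_abs, abs_of_nonneg (Real.sqrt_nonneg δ)]
  set efun : ℤ → ℝ → ℂ := fun q t =>
    Complex.exp (2 * (Real.pi : ℂ) * Complex.I * ((q : ℂ) * (δ : ℂ)) * (t : ℂ)) with hefun
  have henorm : ∀ q : ℤ, ∀ t : ℝ, ‖efun q t‖ = 1 := by
    intro q t
    have : efun q t = Complex.exp (((2 * Real.pi * (q * δ) * t : ℝ) : ℂ) * Complex.I) := by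
      rw [hefun]; push_cast; ring_nf
    rw [this]
    exact Complex.norm_exp_ofReal_mul_I _
  have hecont : ∀ q : ℤ, Continuous (fun t : ℝ => efun q t * c) := by
    intro q
    rw [hefun]
    fun_prop
  set Gfun : ℤ → ℤ → ℝ → ℂ := fun p q =>
    (Set.Ioc (p : ℝ) (p + 1)).indicator (fun t => efun q t * c) with hGfun
  have hGmem : ∀ p q : ℤ, MemLp (Gfun p q) 2 (volume : Measure ℝ) := by
    intro p q
    rw [hGfun, memLp_indicator_iff_restrict measurableSet_Ioc]
    haveI : IsFiniteMeasure ((volume : Measure ℝ).restrict (Set.Ioc (p : ℝ) (p + 1))) :=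
      ⟨by rw [Measure.restrict_apply_univ]; exact measure_Ioc_lt_top⟩
    refine MemLp.of_bound (hecont q).aestronglyMeasurable (Real.sqrt δ)
      (Filter.Eventually.of_forall fun t => ?_)
    rw [norm_mul, henorm, one_mul, hcnorm]
  set f : Lp ℂ 2 (volume : Measure ℝ) :=
    indicatorConstLp 2 measurableSet_Ioc measure_Ioc_lt_top.ne c with hfdef
  set G : ℤ × ℤ → Lp ℂ 2 (volume : Measure ℝ) :=
    fun pq => (hGmem pq.1 pq.2).toLp (Gfun pq.1 pq.2) with hGdef
  refine ⟨f, G, ?_, ?_⟩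
  · -- a.e. identification of G (p, q)
    intro p q
    have h1 : (G (p, q) : ℝ → ℂ) =ᵐ[volume] Gfun p q := MemLp.coeFn_toLp _
    have h2 : (fun t : ℝ => (f : ℝ → ℂ) (t - (p : ℝ)))
        =ᵐ[volume] fun t : ℝ => (Set.Ioc (0 : ℝ) 1).indicator (fun _ => c) (t - (p : ℝ)) := by
      have hind : (f : ℝ → ℂ) =ᵐ[volume] (Set.Ioc (0 : ℝ) 1).indicator (fun _ => c) :=
        indicatorConstLp_coeFn
      exact (measurePreserving_sub_right volume (p : ℝ)).quasiMeasurePreserving.ae_eq hind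
    filter_upwards [h1, h2] with t ht1 ht2
    rw [ht1, ht2]
    by_cases h : t ∈ Set.Ioc (p : ℝ) (p + 1)
    · simp only [hGfun, hefun, Set.indicator_of_mem h, Set.indicator_of_mem ((gabor_mem_iff p t).2 h)]
    · simp only [hGfun, Set.indicator_of_notMem h,
        Set.indicator_of_notMem (fun hc => h ((gabor_mem_iff p t).1 hc)), mul_zero]
  · -- Parseval identity
    intro g
    set gf : ℝ → ℂ := (g : ℝ → ℂ) with hgf
    have hgmem : MemLp gf 2 (volume : Measure ℝ) := Lp.memLp g
    have hgsm : StronglyMeasurable gf := Lp.stronglyMeasurable g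
    have hgint : Integrable (fun t => ‖gf t‖ ^ 2) (volume : Measure ℝ) := by
      have h := hgmem.integrable_norm_rpow (by norm_num) (by norm_num)
      have : ∀ x : ℝ, ‖gf x‖ ^ ((2 : ENNReal).toReal) = ‖gf x‖ ^ 2 := fun x => by
        rw [ENNReal.toReal_ofNat, ← Real.rpow_natCast ‖gf x‖ 2]; norm_num
      simpa only [this] using h
    -- the key computation for a fixed translation parameter p
    have key : ∀ p : ℤ,
        Summable (fun q : ℤ => ‖(inner ℂ g (G (p, q)) : ℂ)‖ ^ 2) ∧
        ∑' q : ℤ, ‖(inner ℂ g (G (p, q)) : ℂ)‖ ^ 2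
          = ∫ t in Set.Ioc (p : ℝ) (p + 1), ‖gf t‖ ^ 2 := by
      intro p
      have hsubset : Set.Ioc (p : ℝ) (p + 1) ⊆ Set.Ioc (p : ℝ) (p + T) :=
        Set.Ioc_subset_Ioc_right (by linarith)
      set hpf : ℝ → ℂ := (Set.Ioc (p : ℝ) (p + 1)).indicator gf with hhp
      have hpsm : StronglyMeasurable hpf := hgsm.indicator measurableSet_Ioc
      have hpmem : MemLp hpf 2 (volume : Measure ℝ) :=
        MemLp.indicator measurableSet_Ioc hgmem
      set H : AddCircle T → ℂ := AddCircle.liftIoc T p hpf with hHdef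
      have hHcoe : ∀ x ∈ Set.Ioc (p : ℝ) (p + T), H ((x : ℝ) : AddCircle T) = hpf x :=
        fun x hx => AddCircle.liftIoc_coe_apply hx
      have hHsm : StronglyMeasurable H := by
        have : H = hpf ∘ (Subtype.val) ∘ (AddCircle.measurableEquivIoc T p) := rfl
        rw [this]
        exact hpsm.comp_measurable
          (measurable_subtype_coe.comp (AddCircle.measurableEquivIoc T p).measurable)
      have haar_eq : (AddCircle.haarAddCircle : Measure (AddCircle T))
          = (ENNReal.ofReal T)⁻¹ • (volume : Measure (AddCircle T)) := by
        rw [AddCircle.volume_eq_smul_haarAddCircle, smul_smul,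
          ENNReal.inv_mul_cancel (ENNReal.ofReal_pos.2 hT0).ne' ENNReal.ofReal_ne_top, one_smul]
      have hHmem : MemLp H 2 (AddCircle.haarAddCircle : Measure (AddCircle T)) := by
        have h1 : MemLp (H ∘ ((↑) : ℝ → AddCircle T)) 2
            ((volume : Measure ℝ).restrict (Set.Ioc (p : ℝ) (p + T))) := by
          refine MemLp.ae_eq ?_ (hpmem.restrict _)
          exact ((ae_restrict_iff' measurableSet_Ioc).2
            (Filter.Eventually.of_forall fun x hx => (hHcoe x hx).symm))
        have h2 : MemLp H 2 (volume : Measure (AddCircle T)) := by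
          rw [← (AddCircle.measurePreserving_mk T (p : ℝ)).map_eq]
          exact (memLp_map_measure_iff hHsm.aestronglyMeasurable
            AddCircle.measurable_mk'.aemeasurable).2 h1
        rw [haar_eq]
        exact h2.smul_measure (by simp [hT0])
      set Hlp : Lp ℂ 2 (AddCircle.haarAddCircle : Measure (AddCircle T)) :=
        hHmem.toLp H with hHlpdef
      have hHlpcoe : (Hlp : AddCircle T → ℂ) =ᵐ[AddCircle.haarAddCircle] H :=
        hHmem.coeFn_toLp
      set B : ℤ → ℂ := fun q =>
        ∫ x in Set.Ioc (p : ℝ) (p + 1), (fourier (-q) ((x : ℝ) : AddCircle T)) * gf x with hB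
      -- Fourier coefficients of Hlp
      have hfc : ∀ q : ℤ, fourierCoeff (Hlp : AddCircle T → ℂ) q = (δ : ℝ) • B q := by
        intro q
        have e1 : fourierCoeff (Hlp : AddCircle T → ℂ) q = fourierCoeff H q := by
          simp only [fourierCoeff]
          exact integral_congr_ae (hHlpcoe.mono fun x hx => by simp only [hx])
        have e2 : ∫ x in Set.Ioc (p : ℝ) (p + T),
            fourier (-q) ((x : ℝ) : AddCircle T) • H ((x : ℝ) : AddCircle T) = B q := by
          rw [setIntegral_congr_fun measurableSet_Ioc
            (g := fun x : ℝ => (Set.Ioc (p : ℝ) (p + 1)).indicator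
              (fun x : ℝ => fourier (-q) ((x : ℝ) : AddCircle T) * gf x) x)
            (fun x hx => ?_), setIntegral_indicator measurableSet_Ioc,
            Set.inter_eq_right.2 hsubset]
          simp only [hHcoe x hx, smul_eq_mul]
          by_cases h : x ∈ Set.Ioc (p : ℝ) (p + 1)
          · simp only [hhp, Set.indicator_of_mem h]
          · simp only [hhp, Set.indicator_of_notMem h, mul_zero]
        rw [e1, fourierCoeff_eq_intervalIntegral H q (p : ℝ),
          intervalIntegral.integral_of_le (by linarith : (p : ℝ) ≤ p + T), e2]
        congr 1
        rw [one_div, hTdef, inv_inv]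
      -- conjugate of the modulation is the Fourier character
      have hconj_e : ∀ q : ℤ, ∀ t : ℝ,
          (starRingEnd ℂ) (efun q t) = fourier (-q) ((t : ℝ) : AddCircle T) := by
        intro q t
        rw [fourier_coe_apply, hefun, ← Complex.exp_conj]
        congr 1
        have hTc : ((T : ℝ) : ℂ) = ((δ : ℝ) : ℂ)⁻¹ := by
          rw [hTdef]; push_cast; ring
        rw [hTc]
        simp only [map_mul, Complex.conj_I, Complex.conj_ofReal, map_ofNat, map_intCast]
        have hδc : ((δ : ℝ) : ℂ) ≠ 0 := Complex.ofReal_ne_zero.2 hδ0.ne'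
        push_cast
        field_simp
      -- the inner products
      have hinner : ∀ q : ℤ, (starRingEnd ℂ) (inner ℂ g (G (p, q)) : ℂ) = c * B q := by
        intro q
        have i1 : (inner ℂ g (G (p, q)) : ℂ)
            = ∫ t : ℝ, (starRingEnd ℂ) (gf t) * (G (p, q) : ℝ → ℂ) t := by
          rw [L2.inner_def]
          simp only [RCLike.inner_apply]
          exact integral_congr_ae (Filter.Eventually.of_forall fun t => mul_comm _ _)
        have i2 : (inner ℂ g (G (p, q)) : ℂ)
            = ∫ t in Set.Ioc (p : ℝ) (p + 1), (starRingEnd ℂ) (gf t) * (efun q t * c) := by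
          rw [i1, ← integral_indicator measurableSet_Ioc]
          refine integral_congr_ae ((MemLp.coeFn_toLp (hGmem p q)).mono fun t ht => ?_)
          show (starRingEnd ℂ) (gf t) * (G (p, q) : ℝ → ℂ) t = _
          rw [ht]
          by_cases h : t ∈ Set.Ioc (p : ℝ) (p + 1)
          · simp only [hGfun, Set.indicator_of_mem h]
          · simp only [hGfun, Set.indicator_of_notMem h, mul_zero]
        rw [i2, ← integral_conj]
        have : ∀ t : ℝ, (starRingEnd ℂ) ((starRingEnd ℂ) (gf t) * (efun q t * c))
            = c * (fourier (-q) ((t : ℝ) : AddCircle T) * gf t) := by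
          intro t
          rw [map_mul, map_mul, Complex.conj_conj, hcconj, hconj_e q t]
          ring
        simp only [this]
        rw [hB, ← integral_const_mul]
      -- squared norms
      have hnormsq : ∀ q : ℤ, ‖(inner ℂ g (G (p, q)) : ℂ)‖ ^ 2 = δ * ‖B q‖ ^ 2 := by
        intro q
        have : ‖(inner ℂ g (G (p, q)) : ℂ)‖ = Real.sqrt δ * ‖B q‖ := by
          rw [← RCLike.norm_conj, hinner q, norm_mul, hcnorm]
        rw [this, mul_pow, Real.sq_sqrt hδ0.le]
      have hfcsq : ∀ q : ℤ, ‖fourierCoeff (Hlp : AddCircle T → ℂ) q‖ ^ 2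
          = δ ^ 2 * ‖B q‖ ^ 2 := by
        intro q
        rw [hfc q, norm_smul, Real.norm_eq_abs, abs_of_pos hδ0, mul_pow]
      have hpoint : ∀ q : ℤ, ‖(inner ℂ g (G (p, q)) : ℂ)‖ ^ 2
          = δ⁻¹ * ‖fourierCoeff (Hlp : AddCircle T → ℂ) q‖ ^ 2 := by
        intro q
        rw [hnormsq q, hfcsq q]
        field_simp
      -- summability via Bessel
      have hsum_fc : Summable fun q : ℤ => ‖fourierCoeff (Hlp : AddCircle T → ℂ) q‖ ^ 2 := by
        have hs := (fourierBasis (T := T)).orthonormal.inner_products_summable (x := Hlp)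
        refine hs.congr fun i => ?_
        congr 1
        rw [← fourierBasis_repr, HilbertBasis.repr_apply_apply]
      -- Parseval value
      have hpars := tsum_sq_fourierCoeff Hlp
      have hval : ∫ t : AddCircle T, ‖(Hlp : AddCircle T → ℂ) t‖ ^ 2 ∂AddCircle.haarAddCircle
          = δ * ∫ t in Set.Ioc (p : ℝ) (p + 1), ‖gf t‖ ^ 2 := by
        have v1 : ∫ t : AddCircle T, ‖(Hlp : AddCircle T → ℂ) t‖ ^ 2 ∂AddCircle.haarAddCircle
            = ∫ t : AddCircle T, ‖H t‖ ^ 2 ∂AddCircle.haarAddCircle :=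
          integral_congr_ae (hHlpcoe.mono fun x hx => by simp only [hx])
        have v2 : ∫ t : AddCircle T, ‖H t‖ ^ 2 ∂AddCircle.haarAddCircle
            = δ * ∫ t : AddCircle T, ‖H t‖ ^ 2 ∂(volume : Measure (AddCircle T)) := by
          have hTinv : T⁻¹ = δ := by rw [hTdef, inv_inv]
          rw [haar_eq, integral_smul_measure, ENNReal.toReal_inv,
            ENNReal.toReal_ofReal hT0.le, smul_eq_mul, hTinv]
        have v3 : ∫ t : AddCircle T, ‖H t‖ ^ 2 ∂(volume : Measure (AddCircle T))
            = ∫ x in Set.Ioc (p : ℝ) (p + T), ‖H ((x : ℝ) : AddCircle T)‖ ^ 2 :=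
          (AddCircle.integral_preimage T (p : ℝ) _).symm
        have v4 : ∫ x in Set.Ioc (p : ℝ) (p + T), ‖H ((x : ℝ) : AddCircle T)‖ ^ 2
            = ∫ t in Set.Ioc (p : ℝ) (p + 1), ‖gf t‖ ^ 2 := by
          rw [setIntegral_congr_fun measurableSet_Ioc
            (g := fun x : ℝ => (Set.Ioc (p : ℝ) (p + 1)).indicator
              (fun t : ℝ => ‖gf t‖ ^ 2) x) (fun x hx => ?_),
            setIntegral_indicator measurableSet_Ioc, Set.inter_eq_right.2 hsubset]
          simp only [hHcoe x hx]
          by_cases h : x ∈ Set.Ioc (p : ℝ) (p + 1)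
          · simp only [hhp, Set.indicator_of_mem h]
          · simp only [hhp, Set.indicator_of_notMem h, norm_zero]
            norm_num
        rw [v1, v2, v3, v4]
      constructor
      · exact (hsum_fc.mul_left δ⁻¹).congr fun q => (hpoint q).symm
      · calc ∑' q : ℤ, ‖(inner ℂ g (G (p, q)) : ℂ)‖ ^ 2
            = ∑' q : ℤ, δ⁻¹ * ‖fourierCoeff (Hlp : AddCircle T → ℂ) q‖ ^ 2 :=
              tsum_congr hpoint
          _ = δ⁻¹ * ∑' q : ℤ, ‖fourierCoeff (Hlp : AddCircle T → ℂ) q‖ ^ 2 := tsum_mul_left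
          _ = δ⁻¹ * (δ * ∫ t in Set.Ioc (p : ℝ) (p + 1), ‖gf t‖ ^ 2) := by
              rw [hpars, hval]
          _ = ∫ t in Set.Ioc (p : ℝ) (p + 1), ‖gf t‖ ^ 2 := by
              field_simp
    -- sum over translations
    have houter : HasSum (fun p : ℤ => ∫ t in Set.Ioc (p : ℝ) (p + 1), ‖gf t‖ ^ 2)
        (∫ t : ℝ, ‖gf t‖ ^ 2) := by
      have hu : (⋃ p : ℤ, Set.Ioc (p : ℝ) (p + 1)) = Set.univ := iUnion_Ioc_intCast ℝ
      have h := hasSum_integral_iUnion (μ := (volume : Measure ℝ))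
        (s := fun p : ℤ => Set.Ioc (p : ℝ) (p + 1)) (fun _ => measurableSet_Ioc)
        (Set.pairwise_disjoint_Ioc_intCast ℝ)
        (f := fun t => ‖gf t‖ ^ 2) (by rw [hu]; exact hgint.integrableOn)
      rwa [hu, Measure.restrict_univ] at h
    have hnormg : ‖g‖ ^ 2 = ∫ t : ℝ, ‖gf t‖ ^ 2 := by
      have h1 : ‖g‖ ^ 2 = RCLike.re (inner ℂ g g : ℂ) := norm_sq_eq_re_inner (𝕜 := ℂ) g
      rw [h1, L2.inner_def, ← integral_re (L2.integrable_inner g g)]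
      refine integral_congr_ae (Filter.Eventually.of_forall fun t => ?_)
      exact inner_self_eq_norm_sq (𝕜 := ℂ) (gf t)
    have hF : Summable (fun pq : ℤ × ℤ => ‖(inner ℂ g (G pq) : ℂ)‖ ^ 2) := by
      rw [summable_prod_of_nonneg (fun pq => by positivity)]
      exact ⟨fun p => (key p).1, houter.summable.congr fun p => ((key p).2).symm⟩
    rw [hF.tsum_prod' fun p => (key p).1]
    calc ∑' p : ℤ, ∑' q : ℤ, ‖(inner ℂ g (G (p, q)) : ℂ)‖ ^ 2
        = ∑' p : ℤ, ∫ t in Set.Ioc (p : ℝ) (p + 1), ‖gf t‖ ^ 2 := tsum_congr fun p => (key p).2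
      _ = ∫ t : ℝ, ‖gf t‖ ^ 2 := houter.tsum_eq
      _ = ‖g‖ ^ 2 := hnormg.symm
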